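/- arXiv:2009.00943 — 5 statements merged into one kernel-verified Lean document; each statement's English description precedes it below -/
import Mathlib

section
/- For a t-definer ⋆ with residuum ⇒, a ⋆ (a ⇒ b) = max{a, b} for all a, b ≥ 0. -/
open NNReal

/-- The residuum of a binary operation on `[0,∞)`. -/
noncomputable def resid (f : ℝ≥0 → ℝ≥0 → ℝ≥0) (a b : ℝ≥0) : ℝ≥0 :=
  sInf {c | b ≤ f c a}

/-- `a ⋆ (a ⇒ b) = max{a,b}`. -/
theorem star_resid_eq_max
    (f : ℝ≥0 → ℝ≥0 → ℝ≥0)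
    (hcomm : ∀ a b, f a b = f b a)
    (hassoc : ∀ a b c, f a (f b c) = f (f a b) c)
    (hmono : ∀ a b c, a ≤ b → f a c ≤ f b c)
    (hzero : ∀ a, f a 0 = a)
    (hcont : ∀ b, Continuous fun a => f a b) :
    ∀ a b, f a (resid f a b) = max a b := by
  intro a b
  rcases le_total b a with hba | hab
  · -- 0 is in the set, so resid = 0
    have h0 : (0 : ℝ≥0) ∈ {c | b ≤ f c a} := by
      simp only [Set.mem_setOf_eq]
      calc b ≤ a := hba
        _ = f 0 a := by rw [hcomm, hzero]
    have : resid f a b = 0 := le_antisymm (csInf_le (OrderBot.bddBelow _) h0) zero_le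
    rw [this, hzero, max_eq_left hba]
  · -- a ≤ b
    set S := {c | b ≤ f c a} with hS
    have hg : Continuous fun c => f c a := hcont a
    have hself : ∀ c : ℝ≥0, c ≤ f c a := by
      intro c
      calc c = f c 0 := (hzero c).symm
        _ = f 0 c := hcomm _ _
        _ ≤ f a c := hmono _ _ _ zero_le
        _ = f c a := hcomm _ _
    have hbS : b ∈ S := hself b
    have hne : S.Nonempty := ⟨b, hbS⟩
    have hclosed : IsClosed S := by
      have : S = (fun c => f c a) ⁻¹' Set.Ici b := rfl
      rw [this]
      exact isClosed_Ici.preimage hg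
    have hmem : sInf S ∈ S := hclosed.csInf_mem hne (OrderBot.bddBelow _)
    -- IVT to get c with f c a = b
    have h0 : f 0 a = a := by rw [hcomm, hzero]
    have hIVT : b ∈ (fun c => f c a) '' Set.Icc 0 b := by
      apply intermediate_value_Icc (zero_le : (0:ℝ≥0) ≤ b) hg.continuousOn
      constructor
      · rw [h0]; exact hab
      · exact hself b
    obtain ⟨c, hc, hcb⟩ := hIVT
    have hcS : c ∈ S := le_of_eq hcb.symm
    have hle : sInf S ≤ c := csInf_le (OrderBot.bddBelow _) hcS
    have h1 : f a (resid f a b) = f (resid f a b) a := hcomm _ _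
    have h2 : b ≤ f (sInf S) a := hmem
    have h3 : f (sInf S) a ≤ f c a := hmono _ _ _ hle
    simp only [] at hcb
    rw [show f c a = b from hcb] at h3
    have : f (resid f a b) a = b := le_antisymm h3 h2
    rw [h1, this, max_eq_right hab]
end

section
/- For any t-definer ⋆ with residuum ⇒, the function d(a,b) = (a ⇒ b) ⋆ (b ⇒ a) defines a ⋆-metric on [0,∞): it is symmetric, vanishes exactly on the diagonal, and satisfies d(a,b) ≤ d(a,c) ⋆ d(c,b). -/
open NNReal

/-- `d(a,b) = (a ⇒ b) ⋆ (b ⇒ a)` is a `⋆`-metric on `[0,∞)`. -/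
theorem resid_dist_is_starMetric
    (f : ℝ≥0 → ℝ≥0 → ℝ≥0)
    (hcomm : ∀ a b, f a b = f b a)
    (hassoc : ∀ a b c, f a (f b c) = f (f a b) c)
    (hmono : ∀ a b c, a ≤ b → f a c ≤ f b c)
    (hzero : ∀ a, f a 0 = a)
    (hcont : ∀ b, Continuous fun a => f a b) :
    (∀ a b, f (resid f a b) (resid f b a) = f (resid f b a) (resid f a b)) ∧
    (∀ a b, f (resid f a b) (resid f b a) = 0 ↔ a = b) ∧
    (∀ a b c, f (resid f a b) (resid f b a) ≤
      f (f (resid f a c) (resid f c a)) (f (resid f c b) (resid f b c))) := by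
  have hzero' : ∀ a, f 0 a = a := fun a => by rw [hcomm, hzero]
  have hmono2 : ∀ a b c, a ≤ b → f c a ≤ f c b := fun a b c h => by
    rw [hcomm c a, hcomm c b]; exact hmono _ _ _ h
  have hge : ∀ a b, b ≤ f b a := fun a b => by
    calc b = f b 0 := (hzero b).symm
    _ ≤ f b a := hmono2 _ _ _ zero_le
  -- the infimum is attained
  have hres : ∀ a b, b ≤ f (resid f a b) a := by
    intro a b
    have hclosed : IsClosed {c | b ≤ f c a} :=
      isClosed_le continuous_const (hcont a)
    have hne : Set.Nonempty {c | b ≤ f c a} := ⟨b, hge a b⟩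
    exact hclosed.csInf_mem hne (OrderBot.bddBelow _)
  have galois : ∀ a b c, resid f a b ≤ c ↔ b ≤ f c a := by
    intro a b c
    constructor
    · intro h; exact le_trans (hres a b) (hmono _ _ _ h)
    · intro h; exact csInf_le (OrderBot.bddBelow _) h
  have resid_zero : ∀ a b, resid f a b = 0 ↔ b ≤ a := by
    intro a b
    rw [← nonpos_iff_eq_zero, galois, hzero']
  have left_comm : ∀ a b c, f a (f b c) = f b (f a c) := fun a b c => by
    rw [hassoc, hcomm a b, ← hassoc]
  refine ⟨fun a b => hcomm _ _, fun a b => ?_, fun a b c => ?_⟩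
  · constructor
    · intro h
      have h1 : resid f a b = 0 := le_antisymm (le_trans (hge _ _) h.le) zero_le
      have h2 : resid f b a = 0 := le_antisymm (le_trans (by rw [hcomm]; exact hge _ _) h.le) zero_le
      exact le_antisymm ((resid_zero b a).mp h2) ((resid_zero a b).mp h1)
    · rintro rfl
      rw [(resid_zero a a).mpr le_rfl, hzero]
  · have tri : ∀ x y z : ℝ≥0, resid f x y ≤ f (resid f z y) (resid f x z) := by
      intro x y z
      rw [galois]
      calc y ≤ f (resid f z y) z := hres z y
      _ ≤ f (resid f z y) (f (resid f x z) x) := hmono2 _ _ _ (hres x z)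
      _ = f (f (resid f z y) (resid f x z)) x := hassoc _ _ _
    calc f (resid f a b) (resid f b a)
        ≤ f (f (resid f c b) (resid f a c)) (f (resid f c a) (resid f b c)) :=
          le_trans (hmono _ _ _ (tri a b c)) (hmono2 _ _ _ (tri b a c))
      _ = f (f (resid f a c) (resid f c a)) (f (resid f c b) (resid f b c)) := by
          simp only [← hassoc]
          rw [left_comm (resid f c b), hcomm (resid f c b), ← hassoc,
            hcomm (resid f b c) (resid f c b)]
end

section
/- For the t-definer ⋆_s(a,b) = √(a² + b²), its residuum is a ⇒ b = √(b² − a²) when a < b and 0 when a ≥ b; consequently d_s(a,b) = √|b² − a²| is a ⋆_s-metric on [0,∞). -/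
open NNReal

lemma tsub_triangle (x y z : ℝ≥0) : x - y ≤ (z - y) + (x - z) := by
  rw [tsub_le_iff_right]
  calc x ≤ (x - z) + z := le_tsub_add
    _ ≤ (x - z) + ((z - y) + y) := by gcongr; exact le_tsub_add
    _ = (z - y) + (x - z) + y := by ring

/-- For `⋆ₛ(a,b) = √(a²+b²)` the residuum is `a ⇒ b = √(b²−a²)` for `a < b`
and `0` for `a ≥ b`; consequently `dₛ(a,b) = √|b²−a²|` is a `⋆ₛ`-metric. -/
theorem starS_resid_and_metric :
    let f : ℝ≥0 → ℝ≥0 → ℝ≥0 := fun a b => NNReal.sqrt (a ^ 2 + b ^ 2)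
    let d : ℝ≥0 → ℝ≥0 → ℝ≥0 := fun a b => NNReal.sqrt ((b ^ 2 - a ^ 2) ⊔ (a ^ 2 - b ^ 2))
    (∀ a b, resid f a b = if a < b then NNReal.sqrt (b ^ 2 - a ^ 2) else 0) ∧
    (∀ a b, d a b = 0 ↔ a = b) ∧
    (∀ a b, d a b = d b a) ∧
    (∀ a b c, d a b ≤ f (d a c) (d c b)) := by
  intro f d
  refine ⟨?_, ?_, ?_, ?_⟩
  · intro a b
    have hset : {c | b ≤ f c a} = Set.Ici (NNReal.sqrt (b ^ 2 - a ^ 2)) := by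
      ext c
      simp only [Set.mem_setOf_eq, Set.mem_Ici, f, NNReal.le_sqrt_iff_sq_le, NNReal.sqrt_le_iff_le_sq,
        tsub_le_iff_right]
    have : resid f a b = NNReal.sqrt (b ^ 2 - a ^ 2) := by
      rw [resid, hset, csInf_Ici]
    rw [this]
    split_ifs with h
    · rfl
    · push_neg at h
      have : b ^ 2 - a ^ 2 = 0 := tsub_eq_zero_of_le (by gcongr)
      rw [this, NNReal.sqrt_zero]
  · intro a b
    simp only [d, NNReal.sqrt_eq_zero]
    constructor
    · intro h
      have h1' : b ^ 2 ≤ a ^ 2 :=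
        tsub_eq_zero_iff_le.mp (le_antisymm (le_sup_left.trans h.le) zero_le)
      have h2' : a ^ 2 ≤ b ^ 2 :=
        tsub_eq_zero_iff_le.mp (le_antisymm (le_sup_right.trans h.le) zero_le)
      have : a ^ 2 = b ^ 2 := le_antisymm h2' h1'
      rw [← NNReal.sqrt_sq a, ← NNReal.sqrt_sq b, this]
    · rintro rfl
      simp
  · intro a b
    simp only [d, sup_comm]
  · intro a b c
    simp only [d, f, NNReal.sq_sqrt]
    rw [NNReal.sqrt_le_sqrt]
    refine sup_le ?_ ?_
    · calc b ^ 2 - a ^ 2 ≤ (c ^ 2 - a ^ 2) + (b ^ 2 - c ^ 2) := tsub_triangle _ _ _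
        _ ≤ ((c ^ 2 - a ^ 2) ⊔ (a ^ 2 - c ^ 2)) + ((b ^ 2 - c ^ 2) ⊔ (c ^ 2 - b ^ 2)) := by
            gcongr <;> exact le_sup_left
    · calc a ^ 2 - b ^ 2 ≤ (c ^ 2 - b ^ 2) + (a ^ 2 - c ^ 2) := tsub_triangle _ _ _
        _ ≤ ((c ^ 2 - a ^ 2) ⊔ (a ^ 2 - c ^ 2)) + ((b ^ 2 - c ^ 2) ⊔ (c ^ 2 - b ^ 2)) := by
            rw [add_comm]; gcongr <;> exact le_sup_right
end

section
/- For every ⋆-metric space (M, d), the collection of open sets (sets each of whose points has an open ball around it contained in the set) forms a Hausdorff topology on M. The key step: for distinct a, b there exists s > 0 with s ⋆ s < d(a,b), since continuity of ⋆ would otherwise force d(a,b) = 0. -/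
open NNReal

theorem starMetric_key (f : ℝ≥0 → ℝ≥0 → ℝ≥0)
    (hcomm : ∀ a b, f a b = f b a)
    (hmono : ∀ a b c, a ≤ b → f a c ≤ f b c)
    (hzero : ∀ a, f a 0 = a)
    (hcont : ∀ b, Continuous fun a => f a b)
    (r : ℝ≥0) (hr : 0 < r) : ∃ s : ℝ≥0, 0 < s ∧ f s s < r := by
  by_contra h
  push_neg at h
  have key : ∀ c : ℝ≥0, 0 < c → r ≤ c := by
    intro c hc
    have htend : Filter.Tendsto (fun s => f s c) (nhdsWithin 0 (Set.Ioi 0)) (nhds c) := by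
      have h2 := (hcont c).tendsto 0
      rw [show f 0 c = c from (hcomm 0 c).trans (hzero c)] at h2
      exact h2.mono_left nhdsWithin_le_nhds
    refine ge_of_tendsto htend ?_
    filter_upwards [self_mem_nhdsWithin, nhdsWithin_le_nhds (Iio_mem_nhds hc)]
      with s hs hsc
    calc r ≤ f s s := h s hs
      _ ≤ f c s := hmono s c s (le_of_lt hsc)
      _ = f s c := hcomm c s
  have := key (r / 2) (by positivity)
  exact absurd this (not_le.mpr (NNReal.half_lt_self hr.ne'))

/-- For every `⋆`-metric space `(M,d)`, the open sets form a Hausdorff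
topology on `M`.  Key step: for distinct `a,b` there is `s > 0` with
`s ⋆ s < d a b`. -/
theorem starMetric_topology_hausdorff {M : Type*}
    (f : ℝ≥0 → ℝ≥0 → ℝ≥0)
    (hcomm : ∀ a b, f a b = f b a)
    (hassoc : ∀ a b c, f a (f b c) = f (f a b) c)
    (hmono : ∀ a b c, a ≤ b → f a c ≤ f b c)
    (hzero : ∀ a, f a 0 = a)
    (hcont : ∀ b, Continuous fun a => f a b)
    (d : M → M → ℝ≥0)
    (hd0 : ∀ x y, d x y = 0 ↔ x = y)
    (hdsymm : ∀ x y, d x y = d y x)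
    (hdtri : ∀ x y z, d x y ≤ f (d x z) (d z y)) :
    (∀ a b : M, a ≠ b → ∃ s : ℝ≥0, 0 < s ∧ f s s < d a b) ∧
    ∃ t : TopologicalSpace M,
      (∀ A : Set M, t.IsOpen A ↔ ∀ x ∈ A, ∃ ε : ℝ≥0, 0 < ε ∧ {y | d x y < ε} ⊆ A) ∧
      @T2Space M t := by
  have hkey : ∀ a b : M, a ≠ b → ∃ s : ℝ≥0, 0 < s ∧ f s s < d a b := by
    intro a b hab
    exact starMetric_key f hcomm hmono hzero hcont (d a b)
      (pos_iff_ne_zero.mpr (fun h0 => hab ((hd0 a b).mp h0)))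
  refine ⟨hkey, ?_⟩
  have hinter : ∀ A B : Set M,
      (∀ x ∈ A, ∃ ε : ℝ≥0, 0 < ε ∧ {y | d x y < ε} ⊆ A) →
      (∀ x ∈ B, ∃ ε : ℝ≥0, 0 < ε ∧ {y | d x y < ε} ⊆ B) →
      ∀ x ∈ A ∩ B, ∃ ε : ℝ≥0, 0 < ε ∧ {y | d x y < ε} ⊆ A ∩ B := by
    intro A B hA hB x hx
    obtain ⟨ε₁, hε₁, hs₁⟩ := hA x hx.1
    obtain ⟨ε₂, hε₂, hs₂⟩ := hB x hx.2
    refine ⟨min ε₁ ε₂, lt_min hε₁ hε₂, fun y hy => ?_⟩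
    have hy' : d x y < min ε₁ ε₂ := hy
    exact ⟨hs₁ (hy'.trans_le (min_le_left _ _)), hs₂ (hy'.trans_le (min_le_right _ _))⟩
  have hsUnion : ∀ S : Set (Set M),
      (∀ A ∈ S, ∀ x ∈ A, ∃ ε : ℝ≥0, 0 < ε ∧ {y | d x y < ε} ⊆ A) →
      ∀ x ∈ ⋃₀ S, ∃ ε : ℝ≥0, 0 < ε ∧ {y | d x y < ε} ⊆ ⋃₀ S := by
    intro S hS x hx
    obtain ⟨A, hA, hxA⟩ := hx
    obtain ⟨ε, hε, hs⟩ := hS A hA x hxA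
    exact ⟨ε, hε, fun y hy => ⟨A, hA, hs hy⟩⟩
  letI t : TopologicalSpace M :=
    { IsOpen := fun A => ∀ x ∈ A, ∃ ε : ℝ≥0, 0 < ε ∧ {y | d x y < ε} ⊆ A,
      isOpen_univ := fun x _ => ⟨1, one_pos, Set.subset_univ _⟩,
      isOpen_inter := hinter, isOpen_sUnion := hsUnion }
  refine ⟨t, fun A => Iff.rfl, ⟨?_⟩⟩
  intro a b hab
  obtain ⟨s, hs, hss⟩ := hkey a b hab
  -- balls of radius s around a and b are open and disjoint
  have ball_open : ∀ c : M, ∀ x, x ∈ {y | d c y < s} →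
      ∃ ε : ℝ≥0, 0 < ε ∧ {y | d x y < ε} ⊆ {y | d c y < s} := by
    intro c x hx
    -- d c x < s; find ε with f (d c x) ε < s
    have htend : Filter.Tendsto (fun ε => f (d c x) ε) (nhds 0) (nhds (d c x)) := by
      have h2 := (hcont (d c x)).tendsto 0
      rw [show f 0 (d c x) = d c x from (hcomm 0 _).trans (hzero _)] at h2
      simpa [hcomm] using h2
    have hev : ∀ᶠ ε in nhds (0 : ℝ≥0), f (d c x) ε < s :=
      htend.eventually (Filter.Tendsto.eventually_lt_const hx Filter.tendsto_id)
    obtain ⟨δ, hδ, hδs⟩ := NNReal.nhds_zero_basis.mem_iff.mp hev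
    refine ⟨δ / 2, by positivity, fun y hy => ?_⟩
    have h1 : f (d c x) (d x y) < s := by
      have : d x y < δ := lt_of_lt_of_le hy (le_of_lt (NNReal.half_lt_self hδ.ne'))
      exact hδs this
    exact lt_of_le_of_lt (hdtri c y x) h1
  refine ⟨{y | d a y < s}, {y | d b y < s}, ball_open a, ball_open b, ?_, ?_, ?_⟩
  · simpa using (hd0 a a).mpr rfl ▸ hs
  · simpa using (hd0 b b).mpr rfl ▸ hs
  · rw [Set.disjoint_left]
    intro z hza hzb
    have : d a b ≤ f s s := by
      calc d a b ≤ f (d a z) (d z b) := hdtri a b z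
        _ ≤ f s (d z b) := hmono _ _ _ (le_of_lt hza)
        _ = f (d z b) s := hcomm _ _
        _ ≤ f s s := hmono _ _ _ (le_of_lt (by rw [hdsymm z b]; exact hzb))
    exact absurd (lt_of_le_of_lt this hss) (lt_irrefl _)
end

section
/- Let (M₁,d₁),…,(Mₙ,dₙ) be ⋆-metric spaces for a fixed t-definer ⋆, and M = ∏ Mᵢ. Then d_max(x̄,ȳ) = maxᵢ dᵢ(xᵢ,yᵢ) and d_T(x̄,ȳ) = d₁(x₁,y₁) ⋆ ⋯ ⋆ dₙ(xₙ,yₙ) are both ⋆-metrics on M, and both induce the product topology of the ⋆-metric topologies on the Mᵢ. -/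
open NNReal
open Topology

/-- The topology on `M` generated by the open balls of `d`. -/
def ballTopology {M : Type*} (d : M → M → ℝ≥0) : TopologicalSpace M :=
  TopologicalSpace.generateFrom {S | ∃ x r, 0 < r ∧ S = {y | d x y < r}}

section Aux
variable {f : ℝ≥0 → ℝ≥0 → ℝ≥0}
variable (hcomm : ∀ a b, f a b = f b a)
variable (hassoc : ∀ a b c, f a (f b c) = f (f a b) c)
variable (hmono : ∀ a b c, a ≤ b → f a c ≤ f b c)
variable (hzero : ∀ a, f a 0 = a)
variable (hcont : ∀ b, Continuous fun a => f a b)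

include hcomm hmono in
lemma pm_mono2 {b c : ℝ≥0} (a : ℝ≥0) (h : b ≤ c) : f a b ≤ f a c := by
  rw [hcomm a b, hcomm a c]; exact hmono _ _ _ h

include hcomm hmono in
lemma pm_monoboth {a b c e : ℝ≥0} (h1 : a ≤ b) (h2 : c ≤ e) : f a c ≤ f b e :=
  le_trans (hmono _ _ _ h1) (pm_mono2 hcomm hmono _ h2)

include hcomm hmono hzero in
lemma pm_le_left (a b : ℝ≥0) : a ≤ f a b := by
  conv_lhs => rw [← hzero a]
  exact pm_mono2 hcomm hmono _ zero_le

include hcomm hmono hzero in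
lemma pm_le_right (a b : ℝ≥0) : b ≤ f a b := by
  rw [hcomm]; exact pm_le_left hcomm hmono hzero b a

include hcomm hassoc in
lemma pm_swap (a b c e : ℝ≥0) : f (f a b) (f c e) = f (f a c) (f b e) := by
  rw [← hassoc, ← hassoc]
  congr 1
  rw [hassoc, hassoc, hcomm b c]

include hcomm hmono in
lemma pm_fold_le_fold {n : ℕ} {g h : Fin n → ℝ≥0} (hle : ∀ i, g i ≤ h i) :
    (List.ofFn g).foldr f 0 ≤ (List.ofFn h).foldr f 0 := by
  induction n with
  | zero => simp
  | succ m ih =>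
    rw [List.ofFn_succ, List.ofFn_succ, List.foldr_cons, List.foldr_cons]
    exact pm_monoboth hcomm hmono (hle 0) (ih (fun i => hle i.succ))

include hcomm hmono hzero in
lemma pm_le_fold {n : ℕ} (g : Fin n → ℝ≥0) (i : Fin n) :
    g i ≤ (List.ofFn g).foldr f 0 := by
  induction n with
  | zero => exact i.elim0
  | succ m ih =>
    rw [List.ofFn_succ, List.foldr_cons]
    refine Fin.cases ?_ (fun j => ?_) i
    · exact pm_le_left hcomm hmono hzero _ _
    · exact le_trans (ih (fun k => g k.succ) j) (pm_le_right hcomm hmono hzero _ _)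

include hzero in
lemma pm_fold_zero {n : ℕ} {g : Fin n → ℝ≥0} (h : ∀ i, g i = 0) :
    (List.ofFn g).foldr f 0 = 0 := by
  induction n with
  | zero => simp
  | succ m ih =>
    rw [List.ofFn_succ, List.foldr_cons, h 0, ih (fun i => h i.succ), hzero]

include hcomm hassoc hzero in
lemma pm_fold_split {n : ℕ} (g h : Fin n → ℝ≥0) :
    (List.ofFn fun i => f (g i) (h i)).foldr f 0 =
      f ((List.ofFn g).foldr f 0) ((List.ofFn h).foldr f 0) := by
  induction n with
  | zero => simp only [List.ofFn_zero, List.foldr_nil]; rw [hzero]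
  | succ m ih =>
    rw [List.ofFn_succ, List.ofFn_succ (f := g), List.ofFn_succ (f := h),
      List.foldr_cons, List.foldr_cons, List.foldr_cons, ih, pm_swap hcomm hassoc]

include hcomm hzero hcont in
lemma pm_cont_small {a r : ℝ≥0} (h : a < r) : ∃ s, 0 < s ∧ f s a < r := by
  have h0 : f 0 a < r := by rw [hcomm, hzero]; exact h
  have hev : ∀ᶠ s in nhds (0 : ℝ≥0), f s a < r :=
    (hcont a).continuousAt.eventually_lt continuousAt_const h0
  obtain ⟨ε, hε, hsub⟩ := NNReal.nhds_zero_basis.eventually_iff.mp hev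
  obtain ⟨s, hs0, hsε⟩ := exists_between hε
  exact ⟨s, hs0, hsub hsε⟩

include hcomm hmono hzero hcont in
lemma pm_iter_small (n : ℕ) {r : ℝ≥0} (hr : 0 < r) :
    ∃ s, 0 < s ∧ (List.ofFn fun _ : Fin n => s).foldr f 0 < r := by
  induction n with
  | zero => exact ⟨1, one_pos, by simpa using hr⟩
  | succ m ih =>
    obtain ⟨s₁, hs₁, hfold⟩ := ih
    obtain ⟨t, ht, hft⟩ := pm_cont_small hcomm hzero hcont hfold
    refine ⟨min t s₁, lt_min ht hs₁, ?_⟩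
    rw [List.ofFn_succ, List.foldr_cons]
    calc f (min t s₁) ((List.ofFn fun _ : Fin m => min t s₁).foldr f 0)
        ≤ f t ((List.ofFn fun _ : Fin m => s₁).foldr f 0) :=
          pm_monoboth hcomm hmono (min_le_left _ _)
            (pm_fold_le_fold hcomm hmono (fun _ => min_le_right _ _))
      _ < r := hft

lemma pm_generate_open {M : Type*} {G : Set (Set M)} {S : Set M}
    (h : ∀ b ∈ S, ∃ B ∈ G, b ∈ B ∧ B ⊆ S) :
    IsOpen[TopologicalSpace.generateFrom G] S := by
  letI := TopologicalSpace.generateFrom G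
  have hS : S = ⋃₀ {B | B ∈ G ∧ B ⊆ S} := by
    apply Set.eq_of_subset_of_subset
    · intro b hb
      obtain ⟨B, hBG, hbB, hBS⟩ := h b hb
      exact ⟨B, ⟨hBG, hBS⟩, hbB⟩
    · rintro b ⟨B, ⟨-, hBS⟩, hbB⟩
      exact hBS hbB
  rw [hS]
  exact isOpen_sUnion fun B hB => TopologicalSpace.GenerateOpen.basic B hB.1

lemma pm_open_of_balls {M : Type*} (d : M → M → ℝ≥0) (hd : ∀ b, d b b = 0) (S : Set M)
    (h : ∀ b ∈ S, ∃ r, 0 < r ∧ {y | d b y < r} ⊆ S) :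
    IsOpen[ballTopology d] S := by
  apply pm_generate_open
  intro b hb
  obtain ⟨r, hr, hsub⟩ := h b hb
  exact ⟨{y | d b y < r}, ⟨b, r, hr, rfl⟩, by simpa [hd b] using hr, hsub⟩
end Aux

/-- For a finite family of `⋆`-metric spaces, `d_max` and `d_T` are `⋆`-metrics
on the product, and both induce the product topology. -/
theorem product_starMetrics {n : ℕ} {M : Fin n → Type*}
    (f : ℝ≥0 → ℝ≥0 → ℝ≥0)
    (hcomm : ∀ a b, f a b = f b a)
    (hassoc : ∀ a b c, f a (f b c) = f (f a b) c)
    (hmono : ∀ a b c, a ≤ b → f a c ≤ f b c)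
    (hzero : ∀ a, f a 0 = a)
    (hcont : ∀ b, Continuous fun a => f a b)
    (d : ∀ i, M i → M i → ℝ≥0)
    (hd0 : ∀ i x y, d i x y = 0 ↔ x = y)
    (hdsymm : ∀ i x y, d i x y = d i y x)
    (hdtri : ∀ i x y z, d i x y ≤ f (d i x z) (d i z y)) :
    let dmax : (∀ i, M i) → (∀ i, M i) → ℝ≥0 :=
      fun x y => Finset.univ.sup fun i => d i (x i) (y i)
    let dT : (∀ i, M i) → (∀ i, M i) → ℝ≥0 :=
      fun x y => (List.ofFn fun i => d i (x i) (y i)).foldr f 0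
    ((∀ x y, dmax x y = 0 ↔ x = y) ∧ (∀ x y, dmax x y = dmax y x) ∧
      (∀ x y z, dmax x y ≤ f (dmax x z) (dmax z y))) ∧
    ((∀ x y, dT x y = 0 ↔ x = y) ∧ (∀ x y, dT x y = dT y x) ∧
      (∀ x y z, dT x y ≤ f (dT x z) (dT z y))) ∧
    ballTopology dmax = @Pi.topologicalSpace (Fin n) M (fun i => ballTopology (d i)) ∧
    ballTopology dT = @Pi.topologicalSpace (Fin n) M (fun i => ballTopology (d i)) := by
  intro dmax dT
  have hdself : ∀ i x, d i x x = 0 := fun i x => (hd0 i x x).mpr rfl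
  -- metric axioms for dmax
  have hmax0 : ∀ x y, dmax x y = 0 ↔ x = y := by
    intro x y
    constructor
    · intro h
      funext i
      exact (hd0 i _ _).mp ((Finset.sup_eq_bot_iff _ _).mp h i (Finset.mem_univ i))
    · rintro rfl
      exact (Finset.sup_eq_bot_iff _ _).mpr fun i _ => hdself i _
  have hmaxsymm : ∀ x y, dmax x y = dmax y x := fun x y =>
    Finset.sup_congr rfl fun i _ => hdsymm i _ _
  have hmaxtri : ∀ x y z, dmax x y ≤ f (dmax x z) (dmax z y) := by
    intro x y z
    refine Finset.sup_le fun i _ => le_trans (hdtri i _ _ (z i))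
      (pm_monoboth hcomm hmono ?_ ?_)
    · exact Finset.le_sup (f := fun j => d j (x j) (z j)) (Finset.mem_univ i)
    · exact Finset.le_sup (f := fun j => d j (z j) (y j)) (Finset.mem_univ i)
  -- metric axioms for dT
  have hTle : ∀ x y i, d i (x i) (y i) ≤ dT x y := fun x y i =>
    pm_le_fold hcomm hmono hzero (fun i => d i (x i) (y i)) i
  have hT0 : ∀ x y, dT x y = 0 ↔ x = y := by
    intro x y
    constructor
    · intro h
      funext i
      exact (hd0 i _ _).mp (le_antisymm (h ▸ hTle x y i) zero_le)
    · rintro rfl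
      exact pm_fold_zero hzero fun i => hdself i _
  have hTsymm : ∀ x y, dT x y = dT y x := by
    intro x y
    have : (fun i => d i (x i) (y i)) = fun i => d i (y i) (x i) :=
      funext fun i => hdsymm i _ _
    exact congrArg (fun l => l.foldr f 0) (congrArg List.ofFn this)
  have hTtri : ∀ x y z, dT x y ≤ f (dT x z) (dT z y) := by
    intro x y z
    calc dT x y ≤ (List.ofFn fun i => f (d i (x i) (z i)) (d i (z i) (y i))).foldr f 0 :=
          pm_fold_le_fold hcomm hmono fun i => hdtri i _ _ (z i)
      _ = f (dT x z) (dT z y) := pm_fold_split hcomm hassoc hzero _ _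
  -- comparisons
  have hmaxleT : ∀ x y, dmax x y ≤ dT x y := fun x y =>
    Finset.sup_le fun i _ => hTle x y i
  have hmaxself : ∀ x, dmax x x = 0 := fun x => (hmax0 x x).mpr rfl
  have hTself : ∀ x, dT x x = 0 := fun x => (hT0 x x).mpr rfl
  -- topology: dmax vs product
  have hmaxPi : ballTopology dmax = @Pi.topologicalSpace (Fin n) M (fun i => ballTopology (d i)) := by
    apply le_antisymm
    · -- finer than product: each projection is continuous
      have hc : ∀ i, @Continuous _ _ (ballTopology dmax) (ballTopology (d i)) (fun x => x i) := by
        intro i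
        letI := ballTopology dmax
        rw [ballTopology, ballTopology, continuous_generateFrom_iff]
        rintro S ⟨z, r, hr, rfl⟩
        refine pm_open_of_balls dmax hmaxself _ ?_
        intro b hb
        obtain ⟨s, hs, hfs⟩ := pm_cont_small hcomm hzero hcont hb
        refine ⟨s, hs, fun y hy => ?_⟩
        show d i z (y i) < r
        calc d i z (y i) ≤ f (d i z (b i)) (d i (b i) (y i)) := hdtri i _ _ _
          _ = f (d i (b i) (y i)) (d i z (b i)) := hcomm _ _
          _ ≤ f s (d i z (b i)) :=
            hmono _ _ _ (le_of_lt (lt_of_le_of_lt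
              (Finset.le_sup (f := fun j => d j (b j) (y j)) (Finset.mem_univ i)) hy))
          _ < r := hfs
      letI : ∀ i, TopologicalSpace (M i) := fun i => ballTopology (d i)
      letI tm := ballTopology dmax
      exact (@continuous_id_iff_le _ tm _).mp (continuous_pi hc)
    · -- product finer than dmax: dmax-balls are open in the product topology
      rw [ballTopology, TopologicalSpace.le_generateFrom_iff_subset_isOpen]
      rintro S ⟨z, r, hr, rfl⟩
      letI : ∀ i, TopologicalSpace (M i) := fun i => ballTopology (d i)
      have hset : {y | dmax z y < r} = ⋂ i, (fun x => x i) ⁻¹' {w | d i (z i) w < r} := by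
        ext y
        simp only [Set.mem_setOf_eq, Set.mem_iInter, Set.mem_preimage]
        rw [Finset.sup_lt_iff (show (⊥ : ℝ≥0) < r from hr)]
        simp
      show IsOpen {y | dmax z y < r}
      rw [hset]
      exact isOpen_iInter_of_finite fun i =>
        (continuous_apply i).isOpen_preimage _
          (TopologicalSpace.GenerateOpen.basic _ ⟨z i, r, hr, rfl⟩)
  -- topology: dT vs dmax
  have hTmax : ballTopology dT = ballTopology dmax := by
    apply le_antisymm
    · show ballTopology dT ≤
        TopologicalSpace.generateFrom {S | ∃ x r, 0 < r ∧ S = {y | dmax x y < r}}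
      rw [TopologicalSpace.le_generateFrom_iff_subset_isOpen]
      rintro S ⟨z, r, hr, rfl⟩
      refine pm_open_of_balls dT hTself _ ?_
      intro b hb
      obtain ⟨s, hs, hfs⟩ := pm_cont_small hcomm hzero hcont hb
      refine ⟨s, hs, fun y hy => ?_⟩
      show dmax z y < r
      calc dmax z y ≤ f (dmax z b) (dmax b y) := hmaxtri _ _ _
        _ = f (dmax b y) (dmax z b) := hcomm _ _
        _ ≤ f s (dmax z b) := hmono _ _ _ (le_of_lt (lt_of_le_of_lt (hmaxleT b y) hy))
        _ < r := hfs
    · show ballTopology dmax ≤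
        TopologicalSpace.generateFrom {S | ∃ x r, 0 < r ∧ S = {y | dT x y < r}}
      rw [TopologicalSpace.le_generateFrom_iff_subset_isOpen]
      rintro S ⟨z, r, hr, rfl⟩
      refine pm_open_of_balls dmax hmaxself _ ?_
      intro b hb
      obtain ⟨s, hs, hfs⟩ := pm_cont_small hcomm hzero hcont hb
      obtain ⟨s', hs', hiter⟩ := pm_iter_small hcomm hmono hzero hcont n hs
      refine ⟨s', hs', fun y hy => ?_⟩
      show dT z y < r
      have hby : dT b y ≤ s := by
        refine le_of_lt (lt_of_le_of_lt ?_ hiter)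
        refine pm_fold_le_fold hcomm hmono fun i => ?_
        exact le_of_lt (lt_of_le_of_lt
          (Finset.le_sup (f := fun j => d j (b j) (y j)) (Finset.mem_univ i)) hy)
      calc dT z y ≤ f (dT z b) (dT b y) := hTtri _ _ _
        _ = f (dT b y) (dT z b) := hcomm _ _
        _ ≤ f s (dT z b) := hmono _ _ _ hby
        _ < r := hfs
  exact ⟨⟨hmax0, hmaxsymm, hmaxtri⟩, ⟨hT0, hTsymm, hTtri⟩, hmaxPi, hTmax.trans hmaxPi⟩
end
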